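/- Let E_min < E_max, let I₀ : [E_min, E_max] → [0,∞) be integrable, let g = (g₁, …, g_m) : [E_min, E_max] → [0,∞)^m be bounded and measurable, and let y : [E_min, E_max] → [0,∞) be measurable with ∫ y(E) g_i(E) dE < ∞ for each i. Define L : ℝ^m → ℝ by L(x) = ∫_{E_min}^{E_max} ( y(E) · ⟨g(E), x⟩ + I₀(E) · exp(−⟨g(E), x⟩) ) dE, and let G be the m×m matrix G_{ij} = ∫_{E_min}^{E_max} I₀(E) g_i(E) g_j(E) dE. Then L is differentiable on ℝ^m with gradient ∇L(x) = ∫_{E_min}^{E_max} ( y(E) − I₀(E)·exp(−⟨g(E), x⟩) ) g(E) dE, and for all u, v ∈ [0,∞)^m (componentwise nonnegative) one has L(v) − L(u) − ⟨∇L(u), v − u⟩ ≤ (1/2) (v − u)ᵀ G (v − u). -/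

import Mathlib

open MeasureTheory
set_option maxHeartbeats 1000000

lemma aux_nonneg (f f' : ℝ → ℝ) (hd : ∀ t, HasDerivAt f (f' t) t)
    (h0 : f 0 = 0) (h' : ∀ t, 0 ≤ t → 0 ≤ f' t) {t : ℝ} (ht : 0 ≤ t) : 0 ≤ f t := by
  have hm : MonotoneOn f (Set.Ici (0:ℝ)) := by
    apply monotoneOn_of_deriv_nonneg (convex_Ici 0)
      (fun x _ => (hd x).continuousAt.continuousWithinAt)
      (fun x hx => ((hd x).differentiableAt).differentiableWithinAt)
    intro x hx
    rw [(hd x).deriv]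
    exact h' x (le_of_lt (by simpa using hx))
  have := hm (Set.self_mem_Ici) ht ht
  simpa [h0] using this

lemma exp_taylor_le {h : ℝ} (hh : 0 ≤ h) : Real.exp (-h) - 1 + h ≤ h ^ 2 / 2 := by
  have := aux_nonneg (fun t => t ^ 2 / 2 + 1 - t - Real.exp (-t))
    (fun t => t - 1 + Real.exp (-t))
    (fun t => by
      have h1 : HasDerivAt (fun t : ℝ => Real.exp (-t)) (-Real.exp (-t)) t := by
        have := (hasDerivAt_neg t).exp
        convert this using 1; ring
      have h2 : HasDerivAt (fun t : ℝ => t ^ 2 / 2 + 1 - t) (t - 1) t := by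
        have : HasDerivAt (fun t : ℝ => t ^ 2 / 2 + 1) t t := by
          simpa using (((hasDerivAt_pow 2 t).div_const 2).add_const 1)
        exact this.sub (hasDerivAt_id t)
      exact (h2.sub h1).congr_deriv (by ring))
    (by simp) (fun t ht => by
      show (0:ℝ) ≤ t - 1 + Real.exp (-t); nlinarith [Real.add_one_le_exp (-t)]) hh
  nlinarith [this]

lemma exp_taylor_le' {k : ℝ} (hk : 0 ≤ k) : 1 - (1 + k) * Real.exp (-k) ≤ k ^ 2 / 2 := by
  have := aux_nonneg (fun t => t ^ 2 / 2 - 1 + (1 + t) * Real.exp (-t))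
    (fun t => t - t * Real.exp (-t))
    (fun t => by
      have h1 : HasDerivAt (fun t : ℝ => Real.exp (-t)) (-Real.exp (-t)) t := by
        have := (hasDerivAt_neg t).exp
        convert this using 1; ring
      have h2 : HasDerivAt (fun t : ℝ => (1 + t) * Real.exp (-t))
          (1 * Real.exp (-t) + (1 + t) * (-Real.exp (-t))) t :=
        HasDerivAt.mul ((hasDerivAt_id t).const_add 1) h1
      have h3 : HasDerivAt (fun t : ℝ => t ^ 2 / 2 - 1) t t := by
        simpa using (((hasDerivAt_pow 2 t).div_const 2).sub_const 1)
      have := h3.add h2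
      exact this.congr_deriv (by ring))
    (by simp) (fun t ht => by
      show (0:ℝ) ≤ t - t * Real.exp (-t)
      have h1 : Real.exp (-t) ≤ 1 := Real.exp_le_one_iff.mpr (by linarith)
      nlinarith) hk
  nlinarith [this]

lemma key_ineq {a b : ℝ} (ha : 0 ≤ a) (hb : 0 ≤ b) :
    Real.exp (-b) - Real.exp (-a) + Real.exp (-a) * (b - a) ≤ (b - a) ^ 2 / 2 := by
  rcases le_total a b with hab | hab
  · have h := exp_taylor_le (h := b - a) (by linarith)
    have hea : Real.exp (-a) ≤ 1 := Real.exp_le_one_iff.mpr (by linarith)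
    have hpos : 0 ≤ Real.exp (-(b - a)) - 1 + (b - a) := by
      nlinarith [Real.add_one_le_exp (-(b - a))]
    have hfact : Real.exp (-b) = Real.exp (-a) * Real.exp (-(b - a)) := by
      rw [← Real.exp_add]; ring_nf
    nlinarith [Real.exp_pos (-a)]
  · set k := a - b with hk
    have hk0 : 0 ≤ k := by simp [hk]; linarith
    have h := exp_taylor_le' hk0
    have heb : Real.exp (-b) ≤ 1 := Real.exp_le_one_iff.mpr (by linarith)
    have hfact : Real.exp (-a) = Real.exp (-b) * Real.exp (-k) := by
      rw [← Real.exp_add, hk]; ring_nf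
    have hprod : Real.exp k * Real.exp (-k) = 1 := by
      rw [← Real.exp_add]; simp
    have hpos : 0 ≤ 1 - (1 + k) * Real.exp (-k) := by
      nlinarith [Real.add_one_le_exp k, Real.exp_pos (-k)]
    have hsq : (b - a) ^ 2 = k ^ 2 := by rw [hk]; ring
    rw [hsq]
    have hexp : 0 < Real.exp (-b) := Real.exp_pos _
    nlinarith

/-- The Kullback–Leibler data fidelity
`L(x) = ∫ (y(E) ⟨g(E),x⟩ + I₀(E) exp(−⟨g(E),x⟩)) dE` is differentiable with
gradient `∫ (y(E) − I₀(E) exp(−⟨g(E),x⟩)) g(E) dE`, and on the nonnegative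
orthant its Bregman remainder is bounded by the quadratic form of the matrix
`G_{ij} = ∫ I₀ gᵢ gⱼ`. -/
theorem stmt_9 (Emin Emax : ℝ) (hE : Emin < Emax) (m : ℕ) (hm : 1 ≤ m)
    (I₀ : ℝ → ℝ) (hI₀meas : Measurable I₀) (hI₀nonneg : ∀ E, 0 ≤ I₀ E)
    (hI₀int : IntegrableOn I₀ (Set.Icc Emin Emax))
    (g : Fin m → ℝ → ℝ) (hgmeas : ∀ i, Measurable (g i)) (hgnonneg : ∀ i E, 0 ≤ g i E)
    (hgbdd : ∃ Cg : ℝ, ∀ i E, g i E ≤ Cg)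
    (y : ℝ → ℝ) (hymeas : Measurable y) (hynonneg : ∀ E, 0 ≤ y E)
    (hyint : ∀ i, IntegrableOn (fun E => y E * g i E) (Set.Icc Emin Emax)) :
    (∀ x : Fin m → ℝ, ∃ D : (Fin m → ℝ) →L[ℝ] ℝ,
      HasFDerivAt (fun x' : Fin m → ℝ => ∫ E in Set.Icc Emin Emax,
          (y E * ∑ i, g i E * x' i + I₀ E * Real.exp (-(∑ i, g i E * x' i)))) D x ∧
      ∀ v : Fin m → ℝ, D v = ∑ i, (∫ E in Set.Icc Emin Emax,
          (y E - I₀ E * Real.exp (-(∑ j, g j E * x j))) * g i E) * v i) ∧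
    (∀ u v : Fin m → ℝ, (∀ i, 0 ≤ u i) → (∀ i, 0 ≤ v i) →
      (∫ E in Set.Icc Emin Emax,
          (y E * ∑ i, g i E * v i + I₀ E * Real.exp (-(∑ i, g i E * v i))))
        - (∫ E in Set.Icc Emin Emax,
            (y E * ∑ i, g i E * u i + I₀ E * Real.exp (-(∑ i, g i E * u i))))
        - ∑ i, (∫ E in Set.Icc Emin Emax,
            (y E - I₀ E * Real.exp (-(∑ j, g j E * u j))) * g i E) * (v i - u i)
      ≤ (1 / 2) * ∑ i, ∑ j,
          (v i - u i) * (∫ E in Set.Icc Emin Emax, I₀ E * g i E * g j E) * (v j - u j)) := by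
  classical
  obtain ⟨Cg, hCg⟩ := hgbdd
  have i0 : Fin m := ⟨0, hm⟩
  have hCg0 : 0 ≤ Cg := le_trans (hgnonneg i0 0) (hCg i0 0)
  set μ : Measure ℝ := volume.restrict (Set.Icc Emin Emax) with hμ
  set S : (Fin m → ℝ) → ℝ → ℝ := fun x E => ∑ i, g i E * x i with hS
  have hSmeas : ∀ x, Measurable (S x) := by
    intro x
    exact Finset.measurable_sum _ fun i _ => (hgmeas i).mul_const _
  -- bound on exp(-(S x E)) for x with componentwise bound R
  have hSabs : ∀ (x : Fin m → ℝ) (R : ℝ), (∀ i, |x i| ≤ R) → ∀ E,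
      Real.exp (-(S x E)) ≤ Real.exp (Cg * m * R) := by
    intro x R hx E
    apply Real.exp_le_exp.mpr
    have h1 : -(S x E) ≤ ∑ i, g i E * |x i| := by
      rw [neg_le]
      have : ∀ i ∈ Finset.univ, -(g i E * |x i|) ≤ g i E * x i := by
        intro i _
        have := abs_le.mp (le_refl |x i|)
        nlinarith [hgnonneg i E, neg_abs_le (x i), hgnonneg i E]
      calc -∑ i, g i E * |x i| = ∑ i, -(g i E * |x i|) := by rw [Finset.sum_neg_distrib]
        _ ≤ ∑ i, g i E * x i := Finset.sum_le_sum this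
    have h2 : ∑ i, g i E * |x i| ≤ ∑ _i : Fin m, Cg * R := by
      apply Finset.sum_le_sum
      intro i _
      have h3 : 0 ≤ |x i| := abs_nonneg _
      nlinarith [hCg i E, hgnonneg i E, hx i, abs_nonneg (x i)]
    calc -(S x E) ≤ ∑ i, g i E * |x i| := h1
      _ ≤ ∑ _i : Fin m, Cg * R := h2
      _ = m * (Cg * R) := by simp [Finset.sum_const, nsmul_eq_mul]
      _ = Cg * m * R := by ring
  have hgsum_le : ∀ E, (∑ i, g i E) ≤ m * Cg := by
    intro E
    calc (∑ i, g i E) ≤ ∑ _i : Fin m, Cg := Finset.sum_le_sum fun i _ => hCg i E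
      _ = m * Cg := by simp [Finset.sum_const, nsmul_eq_mul]
  -- integrability of I₀ * exp(-(S x ·))
  have hI₀exp_meas : ∀ x, Measurable (fun E => I₀ E * Real.exp (-(S x E))) := by
    intro x
    exact hI₀meas.mul ((hSmeas x).neg.exp)
  have hI₀exp_int : ∀ (x : Fin m → ℝ) (R : ℝ), (∀ i, |x i| ≤ R) →
      Integrable (fun E => I₀ E * Real.exp (-(S x E))) μ := by
    intro x R hx
    apply Integrable.mono' (hI₀int.const_mul (Real.exp (Cg * m * R)))
      (hI₀exp_meas x).aestronglyMeasurable
    filter_upwards with E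
    rw [Real.norm_eq_abs, abs_mul, abs_of_nonneg (hI₀nonneg E),
      abs_of_nonneg (Real.exp_nonneg _)]
    have := hSabs x R hx E
    nlinarith [hI₀nonneg E, Real.exp_pos (-(S x E))]
  have hyS_int : ∀ (x : Fin m → ℝ), Integrable (fun E => y E * S x E) μ := by
    intro x
    have : (fun E => y E * S x E) = fun E => ∑ i, (y E * g i E) * x i := by
      funext E; rw [hS]; simp only [Finset.mul_sum]; congr 1; funext i; ring
    rw [this]
    exact integrable_finset_sum _ fun i _ => (hyint i).mul_const _
  have hI₀expg_int : ∀ (x : Fin m → ℝ) (R : ℝ), (∀ i, |x i| ≤ R) → ∀ i,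
      Integrable (fun E => I₀ E * Real.exp (-(S x E)) * g i E) μ := by
    intro x R hx i
    apply Integrable.mono' ((hI₀int.const_mul (Real.exp (Cg * m * R) * Cg)))
      (((hI₀exp_meas x).mul (hgmeas i)).aestronglyMeasurable)
    filter_upwards with E
    rw [Real.norm_eq_abs]; simp only [Pi.mul_apply]; rw [abs_mul, abs_mul, abs_of_nonneg (hI₀nonneg E),
      abs_of_nonneg (Real.exp_nonneg _), abs_of_nonneg (hgnonneg i E)]
    have h1 := hSabs x R hx E
    calc I₀ E * Real.exp (-(S x E)) * g i E
        = I₀ E * (Real.exp (-(S x E)) * g i E) := by ring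
      _ ≤ I₀ E * (Real.exp (Cg * m * R) * Cg) := mul_le_mul_of_nonneg_left
          (mul_le_mul h1 (hCg i E) (hgnonneg i E) (Real.exp_nonneg _)) (hI₀nonneg E)
      _ = Real.exp (Cg * m * R) * Cg * I₀ E := by ring
  have hc_g_int : ∀ (x : Fin m → ℝ) (R : ℝ), (∀ i, |x i| ≤ R) → ∀ i,
      Integrable (fun E => (y E - I₀ E * Real.exp (-(S x E))) * g i E) μ := by
    intro x R hx i
    have : (fun E => (y E - I₀ E * Real.exp (-(S x E))) * g i E)
        = fun E => y E * g i E - I₀ E * Real.exp (-(S x E)) * g i E := by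
      funext E; ring
    rw [this]
    exact (hyint i).sub (hI₀expg_int x R hx i)
  have hIgg_int : ∀ i j, Integrable (fun E => I₀ E * g i E * g j E) μ := by
    intro i j
    apply Integrable.mono' (hI₀int.const_mul (Cg * Cg))
      ((hI₀meas.mul (hgmeas i)).mul (hgmeas j)).aestronglyMeasurable
    filter_upwards with E
    rw [Real.norm_eq_abs]; simp only [Pi.mul_apply]; rw [abs_mul, abs_mul, abs_of_nonneg (hI₀nonneg E),
      abs_of_nonneg (hgnonneg i E), abs_of_nonneg (hgnonneg j E)]
    calc I₀ E * g i E * g j E = I₀ E * (g i E * g j E) := by ring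
      _ ≤ I₀ E * (Cg * Cg) := mul_le_mul_of_nonneg_left
          (mul_le_mul (hCg i E) (hCg j E) (hgnonneg j E) hCg0) (hI₀nonneg E)
      _ = Cg * Cg * I₀ E := by ring
  -- the linear functional P E : v ↦ ∑ i, g i E * v i
  set P : ℝ → (Fin m → ℝ) →L[ℝ] ℝ :=
    fun E => ∑ i, g i E • (ContinuousLinearMap.proj i : (Fin m → ℝ) →L[ℝ] ℝ) with hP
  have hPapply : ∀ E v, P E v = ∑ i, g i E * v i := by
    intro E v
    rw [hP]
    simp [ContinuousLinearMap.sum_apply, ContinuousLinearMap.smul_apply]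
  have hPnorm : ∀ E, ‖P E‖ ≤ ∑ i, g i E := by
    intro E
    apply ContinuousLinearMap.opNorm_le_bound _ (Finset.sum_nonneg fun i _ => hgnonneg i E)
    intro v
    rw [hPapply, Real.norm_eq_abs]
    calc |∑ i, g i E * v i| ≤ ∑ i, |g i E * v i| := Finset.abs_sum_le_sum_abs _ _
      _ ≤ ∑ i, g i E * ‖v‖ := by
          apply Finset.sum_le_sum
          intro i _
          rw [abs_mul, abs_of_nonneg (hgnonneg i E)]
          exact mul_le_mul_of_nonneg_left
            ((abs_le.mpr (abs_le.mp (le_refl _))).trans (norm_le_pi_norm v i)) (hgnonneg i E)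
      _ = (∑ i, g i E) * ‖v‖ := (Finset.sum_mul _ _ _).symm
  have hSderiv : ∀ (x' : Fin m → ℝ) E, HasFDerivAt (fun x'' => S x'' E) (P E) x' := by
    intro x' E
    have heq : (fun x'' : Fin m → ℝ => S x'' E) = fun x'' => P E x'' := by
      funext x''; rw [hPapply]
    rw [heq]
    exact (P E).hasFDerivAt
  have hFderiv : ∀ (x' : Fin m → ℝ) E,
      HasFDerivAt (fun x'' => y E * S x'' E + I₀ E * Real.exp (-(S x'' E)))
        ((y E - I₀ E * Real.exp (-(S x' E))) • P E) x' := by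
    intro x' E
    have h1 := (hSderiv x' E).const_mul (y E)
    have h2 := ((hSderiv x' E).neg).exp
    have h3 := h2.const_mul (I₀ E)
    have h4 := h1.add h3
    refine h4.congr_fderiv ?_
    ext v
    simp only [ContinuousLinearMap.smul_apply, ContinuousLinearMap.add_apply, smul_eq_mul,
      ContinuousLinearMap.neg_apply, Pi.neg_apply]
    ring
  have hcmeas : ∀ x : Fin m → ℝ, AEStronglyMeasurable
      (fun E => (y E - I₀ E * Real.exp (-(S x E))) • P E) μ := by
    intro x
    have heq : (fun E => (y E - I₀ E * Real.exp (-(S x E))) • P E)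
        = fun E => ∑ i, ((y E - I₀ E * Real.exp (-(S x E))) * g i E) •
            (ContinuousLinearMap.proj i : (Fin m → ℝ) →L[ℝ] ℝ) := by
      funext E
      rw [hP, Finset.smul_sum]
      congr 1
      funext i
      rw [smul_smul]
    rw [heq]
    apply Finset.aestronglyMeasurable_fun_sum
    intro i _
    exact (((hymeas.sub (hI₀exp_meas x)).mul (hgmeas i)).aestronglyMeasurable).smul_const _
  -- uniform bound for x' in ball x 1
  have hFbound : ∀ (x : Fin m → ℝ) E, ∀ x' ∈ Metric.ball x 1,
      ‖(y E - I₀ E * Real.exp (-(S x' E))) • P E‖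
        ≤ ∑ i, y E * g i E + (Real.exp (Cg * m * (‖x‖ + 1)) * (m * Cg)) * I₀ E := by
    intro x E x' hx'
    have hx'R : ∀ i, |x' i| ≤ ‖x‖ + 1 := by
      intro i
      have h1 : |x' i| ≤ ‖x'‖ := norm_le_pi_norm x' i
      have h2 : ‖x'‖ ≤ ‖x‖ + ‖x' - x‖ := by
        calc ‖x'‖ = ‖x + (x' - x)‖ := by ring_nf
          _ ≤ ‖x‖ + ‖x' - x‖ := norm_add_le _ _
      have h3 : ‖x' - x‖ < 1 := by rwa [← dist_eq_norm, ← Metric.mem_ball]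
      linarith
    have hexp := hSabs x' (‖x‖ + 1) hx'R E
    have hns := norm_smul_le (y E - I₀ E * Real.exp (-(S x' E))) (P E)
    rw [Real.norm_eq_abs] at hns
    have habs : |y E - I₀ E * Real.exp (-(S x' E))|
        ≤ y E + Real.exp (Cg * m * (‖x‖ + 1)) * I₀ E := by
      rw [abs_sub_comm, abs_sub_le_iff]
      constructor
      · have h5 : 0 ≤ I₀ E * Real.exp (-(S x' E)) :=
          mul_nonneg (hI₀nonneg E) (Real.exp_nonneg _)
        nlinarith [hI₀nonneg E, hynonneg E]
      · nlinarith [hI₀nonneg E, hynonneg E, Real.exp_pos (-(S x' E)),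
          mul_le_mul_of_nonneg_left hexp (hI₀nonneg E)]
    refine le_trans hns ?_
    calc |y E - I₀ E * Real.exp (-(S x' E))| * ‖P E‖
        ≤ (y E + Real.exp (Cg * m * (‖x‖ + 1)) * I₀ E) * (∑ i, g i E) := by
          apply mul_le_mul habs (hPnorm E) (norm_nonneg _)
          have := mul_nonneg (Real.exp_nonneg (Cg * m * (‖x‖ + 1))) (hI₀nonneg E)
          linarith [hynonneg E]
      _ ≤ ∑ i, y E * g i E + (Real.exp (Cg * m * (‖x‖ + 1)) * (m * Cg)) * I₀ E := by
          have hgs : 0 ≤ ∑ i, g i E := Finset.sum_nonneg fun i _ => hgnonneg i E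
          have h6 := hgsum_le E
          have h7 : y E * (∑ i, g i E) = ∑ i, y E * g i E := by rw [Finset.mul_sum]
          have h8 : Real.exp (Cg * m * (‖x‖ + 1)) * I₀ E * (∑ i, g i E)
              ≤ Real.exp (Cg * m * (‖x‖ + 1)) * I₀ E * (m * Cg) :=
            mul_le_mul_of_nonneg_left h6
              (mul_nonneg (Real.exp_nonneg _) (hI₀nonneg E))
          have hexpand : (y E + Real.exp (Cg * m * (‖x‖ + 1)) * I₀ E) * (∑ i, g i E)
              = y E * (∑ i, g i E)
                + Real.exp (Cg * m * (‖x‖ + 1)) * I₀ E * (∑ i, g i E) := by ring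
          linarith [h7, h8, hexpand]
  have hbound_int : ∀ x : Fin m → ℝ, Integrable
      (fun E => ∑ i, y E * g i E + (Real.exp (Cg * m * (‖x‖ + 1)) * (m * Cg)) * I₀ E) μ :=
    fun x => (integrable_finset_sum _ fun i _ => hyint i).add (hI₀int.const_mul _)
  have hF'_int : ∀ x : Fin m → ℝ,
      Integrable (fun E => (y E - I₀ E * Real.exp (-(S x E))) • P E) μ := by
    intro x
    apply Integrable.mono' (hbound_int x) (hcmeas x)
    filter_upwards with E
    exact hFbound x E x (Metric.mem_ball_self one_pos)
  have hxR : ∀ x : Fin m → ℝ, ∀ i, |x i| ≤ ‖x‖ + 1 := by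
    intro x i
    have := norm_le_pi_norm x i
    rw [← Real.norm_eq_abs]
    linarith
  constructor
  · -- part 1: differentiability
    intro x
    refine ⟨∫ E, (y E - I₀ E * Real.exp (-(S x E))) • P E ∂μ, ?_, ?_⟩
    · apply hasFDerivAt_integral_of_dominated_of_fderiv_le
        (F := fun x' E => y E * S x' E + I₀ E * Real.exp (-(S x' E)))
        (F' := fun x' E => (y E - I₀ E * Real.exp (-(S x' E))) • P E)
        (bound := fun E => ∑ i, y E * g i E
          + (Real.exp (Cg * m * (‖x‖ + 1)) * (m * Cg)) * I₀ E)
        (Metric.ball_mem_nhds x one_pos)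
      · exact Filter.Eventually.of_forall fun x' =>
          ((hymeas.mul (hSmeas x')).add (hI₀exp_meas x')).aestronglyMeasurable
      · exact (hyS_int x).add (hI₀exp_int x (‖x‖ + 1) (hxR x))
      · exact hcmeas x
      · exact Filter.Eventually.of_forall fun E x' hx' => hFbound x E x' hx'
      · exact hbound_int x
      · exact Filter.Eventually.of_forall fun E x' _ => hFderiv x' E
    · intro v
      rw [ContinuousLinearMap.integral_apply (hF'_int x)]
      have heq : ∀ E, ((y E - I₀ E * Real.exp (-(S x E))) • P E) v
          = ∑ i, ((y E - I₀ E * Real.exp (-(∑ j, g j E * x j))) * g i E) * v i := by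
        intro E
        rw [ContinuousLinearMap.smul_apply, hPapply, smul_eq_mul, Finset.mul_sum]
        congr 1
        funext i
        rw [hS]
        ring
      rw [integral_congr_ae (Filter.Eventually.of_forall heq)]
      rw [integral_finset_sum _ fun i _ =>
        ((hc_g_int x (‖x‖ + 1) (hxR x) i).mul_const (v i))]
      congr 1
      funext i
      exact integral_mul_const _ _
  · -- part 2: Bregman bound
    intro u v hu hv
    have hSu0 : ∀ E, 0 ≤ S u E := fun E =>
      Finset.sum_nonneg fun i _ => mul_nonneg (hgnonneg i E) (hu i)
    have hSv0 : ∀ E, 0 ≤ S v E := fun E =>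
      Finset.sum_nonneg fun i _ => mul_nonneg (hgnonneg i E) (hv i)
    have hSdiff : ∀ E, S v E - S u E = ∑ i, g i E * (v i - u i) := by
      intro E
      rw [hS, ← Finset.sum_sub_distrib]
      congr 1
      funext i
      ring
    -- integrability pieces
    have hAv := hI₀exp_int v (‖v‖ + 1) (hxR v)
    have hAu := hI₀exp_int u (‖u‖ + 1) (hxR u)
    have hyv := hyS_int v
    have hyu := hyS_int u
    have hterm3_int : Integrable
        (fun E => (y E - I₀ E * Real.exp (-(S u E))) * (S v E - S u E)) μ := by
      have heq : (fun E => (y E - I₀ E * Real.exp (-(S u E))) * (S v E - S u E))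
          = fun E => ∑ i, ((y E - I₀ E * Real.exp (-(S u E))) * g i E) * (v i - u i) := by
        funext E
        rw [hSdiff E, Finset.mul_sum]
        congr 1
        funext i
        ring
      rw [heq]
      exact integrable_finset_sum _ fun i _ =>
        (hc_g_int u (‖u‖ + 1) (hxR u) i).mul_const _
    have hf_int : Integrable (fun E => I₀ E * (Real.exp (-(S v E)) - Real.exp (-(S u E))
        + Real.exp (-(S u E)) * (S v E - S u E))) μ := by
      have heq : (fun E => I₀ E * (Real.exp (-(S v E)) - Real.exp (-(S u E))
            + Real.exp (-(S u E)) * (S v E - S u E)))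
          = fun E => (I₀ E * Real.exp (-(S v E)) - I₀ E * Real.exp (-(S u E)))
              + ∑ i, (I₀ E * Real.exp (-(S u E)) * g i E) * (v i - u i) := by
        funext E
        have hsum : (∑ i, (I₀ E * Real.exp (-(S u E)) * g i E) * (v i - u i))
            = I₀ E * Real.exp (-(S u E)) * (S v E - S u E) := by
          rw [hSdiff E, Finset.mul_sum]
          congr 1
          funext i
          ring
        rw [hsum]
        ring
      rw [heq]
      exact (hAv.sub hAu).add (integrable_finset_sum _ fun i _ =>
        (hI₀expg_int u (‖u‖ + 1) (hxR u) i).mul_const _)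
    have hh_int : Integrable (fun E => (1/2) * (I₀ E * (S v E - S u E)^2)) μ := by
      have heq : (fun E => (1/2) * (I₀ E * (S v E - S u E)^2))
          = fun E => (1/2) * ∑ i, ∑ j,
              (v i - u i) * (I₀ E * g i E * g j E) * (v j - u j) := by
        funext E
        congr 1
        rw [hSdiff E, sq, Finset.sum_mul_sum, Finset.mul_sum]
        congr 1
        funext i
        rw [Finset.mul_sum]
        congr 1
        funext j
        ring
      rw [heq]
      exact (integrable_finset_sum _ fun i _ => integrable_finset_sum _ fun j _ =>
        ((hIgg_int i j).const_mul _).mul_const _).const_mul _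
    -- rewrite term3
    have e_t3 : ∑ i, (∫ E, (y E - I₀ E * Real.exp (-(S u E))) * g i E ∂μ) * (v i - u i)
        = ∫ E, (y E - I₀ E * Real.exp (-(S u E))) * (S v E - S u E) ∂μ := by
      have h1 : ∀ i, (∫ E, (y E - I₀ E * Real.exp (-(S u E))) * g i E ∂μ) * (v i - u i)
          = ∫ E, ((y E - I₀ E * Real.exp (-(S u E))) * g i E) * (v i - u i) ∂μ :=
        fun i => (integral_mul_const _ _).symm
      rw [Finset.sum_congr rfl fun i _ => h1 i,
        ← integral_finset_sum _ fun i _ => (hc_g_int u (‖u‖ + 1) (hxR u) i).mul_const _]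
      apply integral_congr_ae
      filter_upwards with E
      rw [hSdiff E, Finset.mul_sum]
      congr 1
      funext i
      ring
    -- rewrite LHS as a single integral
    have e1 : (∫ E, (y E * S v E + I₀ E * Real.exp (-(S v E))) ∂μ)
        - (∫ E, (y E * S u E + I₀ E * Real.exp (-(S u E))) ∂μ)
        - ∑ i, (∫ E, (y E - I₀ E * Real.exp (-(S u E))) * g i E ∂μ) * (v i - u i)
        = ∫ E, I₀ E * (Real.exp (-(S v E)) - Real.exp (-(S u E))
            + Real.exp (-(S u E)) * (S v E - S u E)) ∂μ := by
      have h1int : Integrable (fun E => y E * S v E + I₀ E * Real.exp (-(S v E))) μ :=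
        hyv.add hAv
      have h2int : Integrable (fun E => y E * S u E + I₀ E * Real.exp (-(S u E))) μ :=
        hyu.add hAu
      have hsub1 : (∫ E, (y E * S v E + I₀ E * Real.exp (-(S v E))) ∂μ)
          - (∫ E, (y E * S u E + I₀ E * Real.exp (-(S u E))) ∂μ)
          = ∫ E, ((y E * S v E + I₀ E * Real.exp (-(S v E)))
              - (y E * S u E + I₀ E * Real.exp (-(S u E)))) ∂μ :=
        (integral_sub h1int h2int).symm
      have hsub2 : (∫ E, ((y E * S v E + I₀ E * Real.exp (-(S v E)))
              - (y E * S u E + I₀ E * Real.exp (-(S u E)))) ∂μ)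
          - (∫ E, (y E - I₀ E * Real.exp (-(S u E))) * (S v E - S u E) ∂μ)
          = ∫ E, (((y E * S v E + I₀ E * Real.exp (-(S v E)))
              - (y E * S u E + I₀ E * Real.exp (-(S u E))))
              - (y E - I₀ E * Real.exp (-(S u E))) * (S v E - S u E)) ∂μ :=
        (integral_sub (h1int.sub h2int) hterm3_int).symm
      rw [e_t3, hsub1, hsub2]
      apply integral_congr_ae
      filter_upwards with E
      ring
    -- rewrite RHS as a single integral
    have e2 : (1 / 2 : ℝ) * ∑ i, ∑ j,
          (v i - u i) * (∫ E, I₀ E * g i E * g j E ∂μ) * (v j - u j)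
        = ∫ E, (1/2) * (I₀ E * (S v E - S u E)^2) ∂μ := by
      have h1 : ∀ i j, (v i - u i) * (∫ E, I₀ E * g i E * g j E ∂μ) * (v j - u j)
          = ∫ E, ((v i - u i) * (I₀ E * g i E * g j E)) * (v j - u j) ∂μ := by
        intro i j
        rw [← integral_const_mul, ← integral_mul_const]
      have h2 : (∫ E, ∑ i, ∑ j, ((v i - u i) * (I₀ E * g i E * g j E)) * (v j - u j) ∂μ)
          = ∑ i, ∑ j, ∫ E, ((v i - u i) * (I₀ E * g i E * g j E)) * (v j - u j) ∂μ := by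
        rw [integral_finset_sum _ fun i _ => integrable_finset_sum _ fun j _ =>
          ((hIgg_int i j).const_mul _).mul_const _]
        exact Finset.sum_congr rfl fun i _ => integral_finset_sum _ fun j _ =>
          ((hIgg_int i j).const_mul _).mul_const _
      calc (1 / 2 : ℝ) * ∑ i, ∑ j,
            (v i - u i) * (∫ E, I₀ E * g i E * g j E ∂μ) * (v j - u j)
          = (1 / 2 : ℝ) * ∑ i, ∑ j,
              ∫ E, ((v i - u i) * (I₀ E * g i E * g j E)) * (v j - u j) ∂μ := by
            congr 1
            exact Finset.sum_congr rfl fun i _ => Finset.sum_congr rfl fun j _ => h1 i j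
        _ = (1 / 2 : ℝ) * ∫ E, ∑ i, ∑ j,
              ((v i - u i) * (I₀ E * g i E * g j E)) * (v j - u j) ∂μ := by rw [h2]
        _ = ∫ E, (1/2) * ∑ i, ∑ j,
              ((v i - u i) * (I₀ E * g i E * g j E)) * (v j - u j) ∂μ :=
            (integral_const_mul _ _).symm
        _ = ∫ E, (1/2) * (I₀ E * (S v E - S u E)^2) ∂μ := by
            apply integral_congr_ae
            filter_upwards with E
            congr 1
            have hsq : (S v E - S u E)^2
                = ∑ i, ∑ j, (g i E * (v i - u i)) * (g j E * (v j - u j)) := by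
              rw [hSdiff E, sq, Finset.sum_mul_sum]
            rw [hsq, Finset.mul_sum]
            refine Finset.sum_congr rfl fun i _ => ?_
            rw [Finset.mul_sum]
            refine Finset.sum_congr rfl fun j _ => ?_
            ring
    have hfinal : (∫ E, (y E * S v E + I₀ E * Real.exp (-(S v E))) ∂μ)
        - (∫ E, (y E * S u E + I₀ E * Real.exp (-(S u E))) ∂μ)
        - ∑ i, (∫ E, (y E - I₀ E * Real.exp (-(S u E))) * g i E ∂μ) * (v i - u i)
        ≤ (1 / 2 : ℝ) * ∑ i, ∑ j,
            (v i - u i) * (∫ E, I₀ E * g i E * g j E ∂μ) * (v j - u j) := by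
      rw [e1, e2]
      apply integral_mono hf_int hh_int
      intro E
      have hk := key_ineq (hSu0 E) (hSv0 E)
      have := mul_le_mul_of_nonneg_left hk (hI₀nonneg E)
      calc I₀ E * (Real.exp (-(S v E)) - Real.exp (-(S u E))
              + Real.exp (-(S u E)) * (S v E - S u E))
          ≤ I₀ E * ((S v E - S u E)^2 / 2) := this
        _ = (1/2) * (I₀ E * (S v E - S u E)^2) := by ring
    exact hfinal
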